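/- Let (H,Δ,ε,1,μ,S) be a cocommutative right Hopf algebra over K. Then for all a,b ∈ H: (i) S(a)·1 = S(a); (ii) S(S(a)) = a·1; (iii) S(S(S(a))) = S(a); (iv) Σ S(a⁽¹⁾)a⁽²⁾·1 = ε(a)1; (v) S(ab) = S(b)S(a). Moreover S is unique: any morphism of C³-coalgebras S′ : H → H with Σ a⁽¹⁾S′(a⁽²⁾) = ε(a)1 for all a equals S. -/

import Mathlib

open TensorProduct

namespace RackPaper

variable (K : Type*) [CommRing K]
variable (B : Type*) [AddCommGroup B] [Module K B]

/-- Comultiplication of the tensor-product coalgebra `B ⊗ B`. -/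
noncomputable def comul2 (comul : B →ₗ[K] B ⊗[K] B) :
    B ⊗[K] B →ₗ[K] (B ⊗[K] B) ⊗[K] (B ⊗[K] B) :=
  (tensorTensorTensorComm K B B B B).toLinearMap ∘ₗ TensorProduct.map comul comul

/-- Counit of the tensor-product coalgebra `B ⊗ B`. -/
noncomputable def counit2 (counit : B →ₗ[K] K) : B ⊗[K] B →ₗ[K] K :=
  (LinearMap.mul' K K) ∘ₗ TensorProduct.map counit counit

/-- `(B, comul, counit, one)` is a coassociative counital coaugmented coalgebra. -/
structure IsC3Coalgebra (comul : B →ₗ[K] B ⊗[K] B) (counit : B →ₗ[K] K) (one : B) : Prop where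
  coassoc : (TensorProduct.assoc K B B B).toLinearMap ∘ₗ
      (TensorProduct.map comul LinearMap.id) ∘ₗ comul
      = (TensorProduct.map LinearMap.id comul) ∘ₗ comul
  counit_comul : (TensorProduct.lid K B).toLinearMap ∘ₗ
      (TensorProduct.map counit LinearMap.id) ∘ₗ comul = LinearMap.id
  comul_counit : (TensorProduct.rid K B).toLinearMap ∘ₗ
      (TensorProduct.map LinearMap.id counit) ∘ₗ comul = LinearMap.id
  comul_one : comul one = one ⊗ₜ[K] one
  counit_one : counit one = 1

/-- A cocommutative right Hopf algebra `(H, Δ, ε, 1, μ, S)`: a cocommutative C³-coalgebra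
with an associative left-unital multiplication `μ` which is a morphism of C³-coalgebras,
together with a right antipode `S`, i.e. a morphism of C³-coalgebras with
`Σ a⁽¹⁾ S(a⁽²⁾) = ε(a) 1`. -/
structure IsRightHopf (comul : B →ₗ[K] B ⊗[K] B) (counit : B →ₗ[K] K) (one : B)
    (mul : B ⊗[K] B →ₗ[K] B) (S : B →ₗ[K] B) : Prop where
  isC3 : IsC3Coalgebra K B comul counit one
  cocomm : ∀ x : B, (TensorProduct.comm K B B) (comul x) = comul x
  comul_mul : comul ∘ₗ mul = (TensorProduct.map mul mul) ∘ₗ comul2 K B comul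
  counit_mul : counit ∘ₗ mul = counit2 K B counit
  mul_assoc : ∀ a b c : B, mul (mul (a ⊗ₜ[K] b) ⊗ₜ[K] c) = mul (a ⊗ₜ[K] mul (b ⊗ₜ[K] c))
  one_mul : ∀ a : B, mul (one ⊗ₜ[K] a) = a
  comul_S : comul ∘ₗ S = (TensorProduct.map S S) ∘ₗ comul
  counit_S : counit ∘ₗ S = counit
  S_one : S one = one
  right_antipode : ∀ a : B,
    mul ((TensorProduct.map LinearMap.id S) (comul a)) = counit a • one


/-! ### Auxiliary machinery -/

section Structural
variable {K₀ : Type*} [CommRing K₀]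
variable {M N P Q M' N' P' Q' : Type*}
  [AddCommGroup M] [Module K₀ M] [AddCommGroup N] [Module K₀ N]
  [AddCommGroup P] [Module K₀ P] [AddCommGroup Q] [Module K₀ Q]
  [AddCommGroup M'] [Module K₀ M'] [AddCommGroup N'] [Module K₀ N']
  [AddCommGroup P'] [Module K₀ P'] [AddCommGroup Q'] [Module K₀ Q']

lemma ttt_nat (f : M →ₗ[K₀] M') (g : N →ₗ[K₀] N') (h : P →ₗ[K₀] P') (k : Q →ₗ[K₀] Q') :
    (tensorTensorTensorComm K₀ M' N' P' Q').toLinearMap ∘ₗ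
        TensorProduct.map (TensorProduct.map f g) (TensorProduct.map h k)
      = TensorProduct.map (TensorProduct.map f h) (TensorProduct.map g k) ∘ₗ
        (tensorTensorTensorComm K₀ M N P Q).toLinearMap := by
  ext m n p q; rfl

lemma comm_nat (f : M →ₗ[K₀] M') (g : N →ₗ[K₀] N') :
    (TensorProduct.comm K₀ M' N').toLinearMap ∘ₗ TensorProduct.map f g
      = TensorProduct.map g f ∘ₗ (TensorProduct.comm K₀ M N).toLinearMap := by
  ext m n; rfl

lemma ttt_comm_comm (A : Type*) [AddCommGroup A] [Module K₀ A] :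
    (tensorTensorTensorComm K₀ A A A A).toLinearMap ∘ₗ
        (TensorProduct.comm K₀ (A ⊗[K₀] A) (A ⊗[K₀] A)).toLinearMap
      = TensorProduct.map (TensorProduct.comm K₀ A A).toLinearMap
          (TensorProduct.comm K₀ A A).toLinearMap ∘ₗ
        (tensorTensorTensorComm K₀ A A A A).toLinearMap := by
  ext a b c d; rfl

end Structural

section Cnv
variable {K₀ : Type*} [CommRing K₀]
variable {H C C' : Type*}
  [AddCommGroup H] [Module K₀ H] [AddCommGroup C] [Module K₀ C]
  [AddCommGroup C'] [Module K₀ C']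

/-- Convolution product on `Hom(C, H)`. -/
noncomputable def cnv (mul : H ⊗[K₀] H →ₗ[K₀] H) (Δc : C →ₗ[K₀] C ⊗[K₀] C)
    (f g : C →ₗ[K₀] H) : C →ₗ[K₀] H :=
  mul ∘ₗ TensorProduct.map f g ∘ₗ Δc

lemma cnv_apply (mul : H ⊗[K₀] H →ₗ[K₀] H) (Δc : C →ₗ[K₀] C ⊗[K₀] C)
    (f g : C →ₗ[K₀] H) (x : C) :
    cnv mul Δc f g x = mul (TensorProduct.map f g (Δc x)) := rfl

lemma cnv_assoc (mul : H ⊗[K₀] H →ₗ[K₀] H) (Δc : C →ₗ[K₀] C ⊗[K₀] C)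
    (hmul : mul ∘ₗ TensorProduct.map mul LinearMap.id
      = mul ∘ₗ TensorProduct.map LinearMap.id mul ∘ₗ (TensorProduct.assoc K₀ H H H).toLinearMap)
    (hco : (TensorProduct.assoc K₀ C C C).toLinearMap ∘ₗ TensorProduct.map Δc LinearMap.id ∘ₗ Δc
      = TensorProduct.map LinearMap.id Δc ∘ₗ Δc)
    (f g h : C →ₗ[K₀] H) :
    cnv mul Δc (cnv mul Δc f g) h = cnv mul Δc f (cnv mul Δc g h) := by
  unfold cnv
  have h1 : TensorProduct.map (mul ∘ₗ TensorProduct.map f g ∘ₗ Δc) h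
      = (TensorProduct.map mul LinearMap.id) ∘ₗ (TensorProduct.map (TensorProduct.map f g) h)
          ∘ₗ (TensorProduct.map Δc LinearMap.id) := by
    rw [← TensorProduct.map_comp, ← TensorProduct.map_comp]
    simp [LinearMap.comp_assoc]
  have h2 : TensorProduct.map f (mul ∘ₗ TensorProduct.map g h ∘ₗ Δc)
      = (TensorProduct.map LinearMap.id mul) ∘ₗ (TensorProduct.map f (TensorProduct.map g h))
          ∘ₗ (TensorProduct.map LinearMap.id Δc) := by
    rw [← TensorProduct.map_comp, ← TensorProduct.map_comp]
    simp [LinearMap.comp_assoc]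
  rw [h1, h2]
  have nat : (TensorProduct.assoc K₀ H H H).toLinearMap ∘ₗ
      TensorProduct.map (TensorProduct.map f g) h
      = TensorProduct.map f (TensorProduct.map g h) ∘ₗ
        (TensorProduct.assoc K₀ C C C).toLinearMap := by
    ext m n p; rfl
  calc mul ∘ₗ ((TensorProduct.map mul LinearMap.id) ∘ₗ
        (TensorProduct.map (TensorProduct.map f g) h) ∘ₗ
        (TensorProduct.map Δc LinearMap.id)) ∘ₗ Δc
      = (mul ∘ₗ TensorProduct.map mul LinearMap.id) ∘ₗ
          (TensorProduct.map (TensorProduct.map f g) h)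
          ∘ₗ ((TensorProduct.map Δc LinearMap.id) ∘ₗ Δc) := by
        simp only [LinearMap.comp_assoc]
    _ = mul ∘ₗ TensorProduct.map LinearMap.id mul ∘ₗ
          (((TensorProduct.assoc K₀ H H H).toLinearMap
          ∘ₗ TensorProduct.map (TensorProduct.map f g) h) ∘ₗ
          ((TensorProduct.map Δc LinearMap.id) ∘ₗ Δc)) := by
        rw [hmul]; simp only [LinearMap.comp_assoc]
    _ = mul ∘ₗ TensorProduct.map LinearMap.id mul ∘ₗ
          TensorProduct.map f (TensorProduct.map g h)
          ∘ₗ ((TensorProduct.assoc K₀ C C C).toLinearMap ∘ₗ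
            (TensorProduct.map Δc LinearMap.id) ∘ₗ Δc) := by
        rw [nat]; simp only [LinearMap.comp_assoc]
    _ = mul ∘ₗ (TensorProduct.map LinearMap.id mul ∘ₗ
          TensorProduct.map f (TensorProduct.map g h) ∘ₗ
          TensorProduct.map LinearMap.id Δc) ∘ₗ Δc := by
        rw [hco]; simp only [LinearMap.comp_assoc]

lemma cnv_comp (mul : H ⊗[K₀] H →ₗ[K₀] H) (Δc : C →ₗ[K₀] C ⊗[K₀] C)
    (Δc' : C' →ₗ[K₀] C' ⊗[K₀] C') (h : C' →ₗ[K₀] C)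
    (hh : Δc ∘ₗ h = TensorProduct.map h h ∘ₗ Δc') (f g : C →ₗ[K₀] H) :
    (cnv mul Δc f g) ∘ₗ h = cnv mul Δc' (f ∘ₗ h) (g ∘ₗ h) := by
  unfold cnv
  rw [TensorProduct.map_comp]
  simp only [LinearMap.comp_assoc, hh]

lemma cnv_left_unit (mul : H ⊗[K₀] H →ₗ[K₀] H) (one : H) (Δc : C →ₗ[K₀] C ⊗[K₀] C)
    (εc : C →ₗ[K₀] K₀)
    (hcl : (TensorProduct.lid K₀ C).toLinearMap ∘ₗ
      TensorProduct.map εc LinearMap.id ∘ₗ Δc = LinearMap.id)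
    (honemul : ∀ a : H, mul (one ⊗ₜ[K₀] a) = a)
    (f : C →ₗ[K₀] H) :
    cnv mul Δc (LinearMap.toSpanSingleton K₀ H one ∘ₗ εc) f = f := by
  unfold cnv
  have h1 : TensorProduct.map (LinearMap.toSpanSingleton K₀ H one ∘ₗ εc) f
      = TensorProduct.map (LinearMap.toSpanSingleton K₀ H one) f ∘ₗ
        TensorProduct.map εc LinearMap.id := by
    rw [← TensorProduct.map_comp]; simp
  have h2 : ∀ c, TensorProduct.map εc LinearMap.id (Δc c) = (TensorProduct.lid K₀ C).symm c := by
    intro c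
    have h := LinearMap.congr_fun hcl c
    simp only [LinearMap.coe_comp, Function.comp_apply, LinearEquiv.coe_coe,
      LinearMap.id_coe, id_eq] at h
    rw [LinearEquiv.eq_symm_apply]
    exact h
  rw [h1]
  ext c
  simp [h2 c, honemul]

lemma cnv_right_unit (mul : H ⊗[K₀] H →ₗ[K₀] H) (one : H) (Δc : C →ₗ[K₀] C ⊗[K₀] C)
    (εc : C →ₗ[K₀] K₀)
    (hcr : (TensorProduct.rid K₀ C).toLinearMap ∘ₗ
      TensorProduct.map LinearMap.id εc ∘ₗ Δc = LinearMap.id)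
    (f : C →ₗ[K₀] H) :
    cnv mul Δc f (LinearMap.toSpanSingleton K₀ H one ∘ₗ εc)
      = (mul ∘ₗ (TensorProduct.mk K₀ H H).flip one) ∘ₗ f := by
  unfold cnv
  have h1 : TensorProduct.map f (LinearMap.toSpanSingleton K₀ H one ∘ₗ εc)
      = TensorProduct.map f (LinearMap.toSpanSingleton K₀ H one) ∘ₗ
        TensorProduct.map LinearMap.id εc := by
    rw [← TensorProduct.map_comp]; simp
  have h2 : ∀ c, TensorProduct.map LinearMap.id εc (Δc c)
      = (TensorProduct.rid K₀ C).symm c := by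
    intro c
    have h := LinearMap.congr_fun hcr c
    simp only [LinearMap.coe_comp, Function.comp_apply, LinearEquiv.coe_coe,
      LinearMap.id_coe, id_eq] at h
    rw [LinearEquiv.eq_symm_apply]
    exact h
  rw [h1]
  ext c
  simp [h2 c]

end Cnv

section Comul2Lemmas
variable {K : Type*} [CommRing K] {B : Type*} [AddCommGroup B] [Module K B]

lemma comul2_coassoc (D : B →ₗ[K] B ⊗[K] B)
    (hco : (TensorProduct.assoc K B B B).toLinearMap ∘ₗ
      (TensorProduct.map D LinearMap.id) ∘ₗ D = (TensorProduct.map LinearMap.id D) ∘ₗ D) :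
    (TensorProduct.assoc K (B ⊗[K] B) (B ⊗[K] B) (B ⊗[K] B)).toLinearMap ∘ₗ
      (TensorProduct.map (comul2 K B D) LinearMap.id) ∘ₗ comul2 K B D
    = (TensorProduct.map LinearMap.id (comul2 K B D)) ∘ₗ comul2 K B D := by
  have hco' : TensorProduct.map D LinearMap.id ∘ₗ D
      = (TensorProduct.assoc K B B B).symm.toLinearMap ∘ₗ
        ((TensorProduct.map LinearMap.id D) ∘ₗ D) := by
    rw [LinearEquiv.eq_toLinearMap_symm_comp]
    rw [← LinearMap.comp_assoc]
    exact hco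
  set γ := (tensorTensorTensorComm K B B B B).toLinearMap with hγ
  set γ₁ := (tensorTensorTensorComm K (B ⊗[K] B) B (B ⊗[K] B) B).toLinearMap with hγ₁
  set γ₂ := (tensorTensorTensorComm K B (B ⊗[K] B) B (B ⊗[K] B)).toLinearMap with hγ₂
  set α := (TensorProduct.assoc K B B B).symm.toLinearMap with hα
  set A := (TensorProduct.assoc K (B ⊗[K] B) (B ⊗[K] B) (B ⊗[K] B)).toLinearMap with hA
  have nat1 : TensorProduct.map (TensorProduct.map D D) LinearMap.id ∘ₗ γ
      = γ₁ ∘ₗ TensorProduct.map (TensorProduct.map D LinearMap.id)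
          (TensorProduct.map D LinearMap.id) := by
    ext a b c d; rfl
  have nat2 : TensorProduct.map LinearMap.id (TensorProduct.map D D) ∘ₗ γ
      = γ₂ ∘ₗ TensorProduct.map (TensorProduct.map LinearMap.id D)
          (TensorProduct.map LinearMap.id D) := by
    ext a b c d; rfl
  have pent : A ∘ₗ TensorProduct.map γ LinearMap.id ∘ₗ γ₁ ∘ₗ TensorProduct.map α α
      = TensorProduct.map LinearMap.id γ ∘ₗ γ₂ := by
    ext a b c d e f; rfl
  have split : comul2 K B D = γ ∘ₗ TensorProduct.map D D := rfl
  calc A ∘ₗ (TensorProduct.map (comul2 K B D) LinearMap.id) ∘ₗ comul2 K B D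
      = A ∘ₗ ((TensorProduct.map γ LinearMap.id ∘ₗ
          TensorProduct.map (TensorProduct.map D D) LinearMap.id) ∘ₗ
          (γ ∘ₗ TensorProduct.map D D)) := by
        rw [split, ← TensorProduct.map_comp]
        simp only [LinearMap.comp_assoc, LinearMap.id_comp]
    _ = A ∘ₗ TensorProduct.map γ LinearMap.id ∘ₗ
          ((TensorProduct.map (TensorProduct.map D D) LinearMap.id ∘ₗ γ) ∘ₗ
            TensorProduct.map D D) := by
        simp only [LinearMap.comp_assoc]
    _ = A ∘ₗ TensorProduct.map γ LinearMap.id ∘ₗ ((γ₁ ∘ₗ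
          TensorProduct.map (TensorProduct.map D LinearMap.id)
            (TensorProduct.map D LinearMap.id)) ∘ₗ TensorProduct.map D D) := by
        rw [nat1]
    _ = A ∘ₗ TensorProduct.map γ LinearMap.id ∘ₗ γ₁ ∘ₗ
          TensorProduct.map (TensorProduct.map D LinearMap.id ∘ₗ D)
            (TensorProduct.map D LinearMap.id ∘ₗ D) := by
        rw [TensorProduct.map_comp]
        simp only [LinearMap.comp_assoc]
    _ = A ∘ₗ TensorProduct.map γ LinearMap.id ∘ₗ γ₁ ∘ₗ
          TensorProduct.map (α ∘ₗ ((TensorProduct.map LinearMap.id D) ∘ₗ D))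
            (α ∘ₗ ((TensorProduct.map LinearMap.id D) ∘ₗ D)) := by
        rw [← hco']
    _ = (A ∘ₗ TensorProduct.map γ LinearMap.id ∘ₗ γ₁ ∘ₗ TensorProduct.map α α) ∘ₗ
          (TensorProduct.map (TensorProduct.map LinearMap.id D)
            (TensorProduct.map LinearMap.id D) ∘ₗ TensorProduct.map D D) := by
        rw [TensorProduct.map_comp (f₂ := α) (g₂ := α), TensorProduct.map_comp]
        simp only [LinearMap.comp_assoc]
    _ = (TensorProduct.map LinearMap.id γ ∘ₗ γ₂) ∘ₗ
          (TensorProduct.map (TensorProduct.map LinearMap.id D)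
            (TensorProduct.map LinearMap.id D) ∘ₗ TensorProduct.map D D) := by
        rw [pent]
    _ = TensorProduct.map LinearMap.id γ ∘ₗ
          ((γ₂ ∘ₗ TensorProduct.map (TensorProduct.map LinearMap.id D)
            (TensorProduct.map LinearMap.id D)) ∘ₗ TensorProduct.map D D) := by
        simp only [LinearMap.comp_assoc]
    _ = TensorProduct.map LinearMap.id γ ∘ₗ
          ((TensorProduct.map LinearMap.id (TensorProduct.map D D) ∘ₗ γ) ∘ₗ
            TensorProduct.map D D) := by
        rw [nat2]
    _ = (TensorProduct.map LinearMap.id (comul2 K B D)) ∘ₗ comul2 K B D := by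
        rw [split]
        simp only [← LinearMap.comp_assoc]
        rw [← TensorProduct.map_comp]
        simp only [LinearMap.id_comp]

lemma comul2_counit_left (D : B →ₗ[K] B ⊗[K] B) (ε : B →ₗ[K] K)
    (hcl : (TensorProduct.lid K B).toLinearMap ∘ₗ
      (TensorProduct.map ε LinearMap.id) ∘ₗ D = LinearMap.id) :
    (TensorProduct.lid K (B ⊗[K] B)).toLinearMap ∘ₗ
      (TensorProduct.map (counit2 K B ε) LinearMap.id) ∘ₗ comul2 K B D = LinearMap.id := by
  have struct : (TensorProduct.lid K (B ⊗[K] B)).toLinearMap ∘ₗ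
      (TensorProduct.map (counit2 K B ε) LinearMap.id) ∘ₗ
        (tensorTensorTensorComm K B B B B).toLinearMap
      = TensorProduct.map
          ((TensorProduct.lid K B).toLinearMap ∘ₗ TensorProduct.map ε LinearMap.id)
          ((TensorProduct.lid K B).toLinearMap ∘ₗ TensorProduct.map ε LinearMap.id) := by
    ext a b c d
    simp only [AlgebraTensorModule.curry_apply, TensorProduct.curry_apply,
      LinearMap.coe_restrictScalars, LinearMap.coe_comp, Function.comp_apply,
      LinearEquiv.coe_coe, tensorTensorTensorComm_tmul, map_tmul, LinearMap.id_coe,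
      id_eq, lid_tmul, LinearMap.mul'_apply, counit2]
    rw [TensorProduct.smul_tmul', TensorProduct.tmul_smul, TensorProduct.smul_tmul',
      smul_smul, mul_comm]
  have hsplit : comul2 K B D
      = (tensorTensorTensorComm K B B B B).toLinearMap ∘ₗ TensorProduct.map D D := rfl
  calc (TensorProduct.lid K (B ⊗[K] B)).toLinearMap ∘ₗ
      (TensorProduct.map (counit2 K B ε) LinearMap.id) ∘ₗ comul2 K B D
      = ((TensorProduct.lid K (B ⊗[K] B)).toLinearMap ∘ₗ
          (TensorProduct.map (counit2 K B ε) LinearMap.id) ∘ₗ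
          (tensorTensorTensorComm K B B B B).toLinearMap) ∘ₗ TensorProduct.map D D := by
        rw [hsplit]; simp only [LinearMap.comp_assoc]
    _ = TensorProduct.map
          (((TensorProduct.lid K B).toLinearMap ∘ₗ TensorProduct.map ε LinearMap.id) ∘ₗ D)
          (((TensorProduct.lid K B).toLinearMap ∘ₗ TensorProduct.map ε LinearMap.id) ∘ₗ D) := by
        rw [struct, ← TensorProduct.map_comp]
    _ = LinearMap.id := by
        have h0 : ((TensorProduct.lid K B).toLinearMap ∘ₗ
            TensorProduct.map ε LinearMap.id) ∘ₗ D = LinearMap.id := by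
          simpa [LinearMap.comp_assoc] using hcl
        rw [h0, TensorProduct.map_id]

lemma comul2_counit_right (D : B →ₗ[K] B ⊗[K] B) (ε : B →ₗ[K] K)
    (hcr : (TensorProduct.rid K B).toLinearMap ∘ₗ
      (TensorProduct.map LinearMap.id ε) ∘ₗ D = LinearMap.id) :
    (TensorProduct.rid K (B ⊗[K] B)).toLinearMap ∘ₗ
      (TensorProduct.map LinearMap.id (counit2 K B ε)) ∘ₗ comul2 K B D = LinearMap.id := by
  have struct : (TensorProduct.rid K (B ⊗[K] B)).toLinearMap ∘ₗ
      (TensorProduct.map LinearMap.id (counit2 K B ε)) ∘ₗ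
        (tensorTensorTensorComm K B B B B).toLinearMap
      = TensorProduct.map
          ((TensorProduct.rid K B).toLinearMap ∘ₗ TensorProduct.map LinearMap.id ε)
          ((TensorProduct.rid K B).toLinearMap ∘ₗ TensorProduct.map LinearMap.id ε) := by
    ext a b c d
    simp only [AlgebraTensorModule.curry_apply, TensorProduct.curry_apply,
      LinearMap.coe_restrictScalars, LinearMap.coe_comp, Function.comp_apply,
      LinearEquiv.coe_coe, tensorTensorTensorComm_tmul, map_tmul, LinearMap.id_coe,
      id_eq, rid_tmul, LinearMap.mul'_apply, counit2]
    rw [TensorProduct.smul_tmul', TensorProduct.tmul_smul, TensorProduct.smul_tmul',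
      smul_smul, mul_comm]
  have hsplit : comul2 K B D
      = (tensorTensorTensorComm K B B B B).toLinearMap ∘ₗ TensorProduct.map D D := rfl
  calc (TensorProduct.rid K (B ⊗[K] B)).toLinearMap ∘ₗ
      (TensorProduct.map LinearMap.id (counit2 K B ε)) ∘ₗ comul2 K B D
      = ((TensorProduct.rid K (B ⊗[K] B)).toLinearMap ∘ₗ
          (TensorProduct.map LinearMap.id (counit2 K B ε)) ∘ₗ
          (tensorTensorTensorComm K B B B B).toLinearMap) ∘ₗ TensorProduct.map D D := by
        rw [hsplit]; simp only [LinearMap.comp_assoc]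
    _ = TensorProduct.map
          (((TensorProduct.rid K B).toLinearMap ∘ₗ TensorProduct.map LinearMap.id ε) ∘ₗ D)
          (((TensorProduct.rid K B).toLinearMap ∘ₗ TensorProduct.map LinearMap.id ε) ∘ₗ D) := by
        rw [struct, ← TensorProduct.map_comp]
    _ = LinearMap.id := by
        have h0 : ((TensorProduct.rid K B).toLinearMap ∘ₗ
            TensorProduct.map LinearMap.id ε) ∘ₗ D = LinearMap.id := by
          simpa [LinearMap.comp_assoc] using hcr
        rw [h0, TensorProduct.map_id]

lemma comul2_map (D : B →ₗ[K] B ⊗[K] B) (f g : B →ₗ[K] B)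
    (hf : D ∘ₗ f = TensorProduct.map f f ∘ₗ D) (hg : D ∘ₗ g = TensorProduct.map g g ∘ₗ D) :
    comul2 K B D ∘ₗ TensorProduct.map f g
      = TensorProduct.map (TensorProduct.map f g) (TensorProduct.map f g) ∘ₗ comul2 K B D := by
  have split : comul2 K B D
      = (tensorTensorTensorComm K B B B B).toLinearMap ∘ₗ TensorProduct.map D D := rfl
  rw [split, LinearMap.comp_assoc, ← TensorProduct.map_comp, hf, hg,
    TensorProduct.map_comp, ← LinearMap.comp_assoc, ttt_nat]
  simp only [LinearMap.comp_assoc]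

lemma comul2_comm (D : B →ₗ[K] B ⊗[K] B) :
    comul2 K B D ∘ₗ (TensorProduct.comm K B B).toLinearMap
      = TensorProduct.map (TensorProduct.comm K B B).toLinearMap
          (TensorProduct.comm K B B).toLinearMap ∘ₗ comul2 K B D := by
  have split : comul2 K B D
      = (tensorTensorTensorComm K B B B B).toLinearMap ∘ₗ TensorProduct.map D D := rfl
  rw [split, LinearMap.comp_assoc, ← comm_nat, ← LinearMap.comp_assoc, ttt_comm_comm]
  simp only [LinearMap.comp_assoc]

lemma counit2_map (ε : B →ₗ[K] K) (f g : B →ₗ[K] B)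
    (hf : ε ∘ₗ f = ε) (hg : ε ∘ₗ g = ε) :
    counit2 K B ε ∘ₗ TensorProduct.map f g = counit2 K B ε := by
  unfold counit2
  rw [LinearMap.comp_assoc, ← TensorProduct.map_comp, hf, hg]

lemma counit2_comm (ε : B →ₗ[K] K) :
    counit2 K B ε ∘ₗ (TensorProduct.comm K B B).toLinearMap = counit2 K B ε := by
  ext x y
  simp [counit2, LinearMap.mul'_apply, mul_comm]

end Comul2Lemmas

/-- Let `(H, Δ, ε, 1, μ, S)` be a cocommutative right Hopf algebra over `K`.
Then for all `a, b ∈ H`: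
(i) `S(a)·1 = S(a)`;  (ii) `S(S(a)) = a·1`;  (iii) `S(S(S(a))) = S(a)`;
(iv) `Σ S(a⁽¹⁾) a⁽²⁾ · 1 = ε(a) 1`;  (v) `S(ab) = S(b) S(a)`.
Moreover the right antipode is unique: any morphism of C³-coalgebras `S' : H → H` with
`Σ a⁽¹⁾ S'(a⁽²⁾) = ε(a) 1` for all `a` equals `S`. -/
theorem rightHopf_antipode_properties
    (K : Type*) [CommRing K] [Algebra ℚ K]
    (H : Type*) [AddCommGroup H] [Module K H]
    (comul : H →ₗ[K] H ⊗[K] H) (counit : H →ₗ[K] K) (one : H)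
    (mul : H ⊗[K] H →ₗ[K] H) (S : H →ₗ[K] H)
    (hH : IsRightHopf K H comul counit one mul S) :
    (∀ a : H, mul (S a ⊗ₜ[K] one) = S a) ∧
    (∀ a : H, S (S a) = mul (a ⊗ₜ[K] one)) ∧
    (∀ a : H, S (S (S a)) = S a) ∧
    (∀ a : H, mul ((mul ((TensorProduct.map S LinearMap.id) (comul a))) ⊗ₜ[K] one)
      = counit a • one) ∧
    (∀ a b : H, S (mul (a ⊗ₜ[K] b)) = mul (S b ⊗ₜ[K] S a)) ∧
    (∀ S' : H →ₗ[K] H,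
      comul ∘ₗ S' = (TensorProduct.map S' S') ∘ₗ comul →
      counit ∘ₗ S' = counit → S' one = one →
      (∀ a : H, mul ((TensorProduct.map LinearMap.id S') (comul a)) = counit a • one) →
      S' = S) := by
  classical
  set E : H →ₗ[K] H := LinearMap.toSpanSingleton K H one ∘ₗ counit with hE
  set R : H →ₗ[K] H := mul ∘ₗ (TensorProduct.mk K H H).flip one with hR
  have hRapp : ∀ a : H, R a = mul (a ⊗ₜ[K] one) := fun a => rfl
  have hEapp : ∀ a : H, E a = counit a • one := fun a => by simp [hE]
  have mulA : mul ∘ₗ TensorProduct.map mul LinearMap.id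
      = mul ∘ₗ TensorProduct.map LinearMap.id mul ∘ₗ
        (TensorProduct.assoc K H H H).toLinearMap := by
    ext a b c
    simp [hH.mul_assoc]
  have convA : ∀ f g h : H →ₗ[K] H,
      cnv mul comul (cnv mul comul f g) h = cnv mul comul f (cnv mul comul g h) :=
    fun f g h => cnv_assoc mul comul mulA hH.isC3.coassoc f g h
  have convL : ∀ f : H →ₗ[K] H, cnv mul comul E f = f := by
    intro f
    rw [hE]
    exact cnv_left_unit mul one comul counit hH.isC3.counit_comul hH.one_mul f
  have convR : ∀ f : H →ₗ[K] H, cnv mul comul f E = R ∘ₗ f := by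
    intro f
    rw [hE, hR]
    exact cnv_right_unit mul one comul counit hH.isC3.comul_counit f
  have antipodeM : cnv mul comul LinearMap.id S = E := by
    apply LinearMap.ext
    intro a
    rw [cnv_apply, hEapp]
    exact hH.right_antipode a
  have ES : E ∘ₗ S = E := by rw [hE, LinearMap.comp_assoc, hH.counit_S]
  have convIdE : cnv mul comul LinearMap.id E = R := by
    rw [convR, LinearMap.comp_id]
  have A1 : cnv mul comul S (S ∘ₗ S) = E := by
    have h := cnv_comp mul comul comul S hH.comul_S LinearMap.id S
    rw [antipodeM, LinearMap.id_comp] at h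
    rw [← h, ES]
  have A2 : S ∘ₗ S = R := by
    conv_lhs => rw [← convL (S ∘ₗ S)]
    rw [← antipodeM, convA, A1, convIdE]
  have A3 : cnv mul comul R S = E := by
    rw [← convIdE, convA, convL, antipodeM]
  have A4 : R ∘ₗ S = S := by
    have h1 : cnv mul comul (cnv mul comul S (S ∘ₗ S)) S = R ∘ₗ S := by
      rw [convA, A2, A3, convR]
    have h2 : cnv mul comul (cnv mul comul S (S ∘ₗ S)) S = S := by
      rw [A1, convL]
    exact h1.symm.trans h2
  have SR : S ∘ₗ R = S := by
    rw [← A2, ← LinearMap.comp_assoc, A2, A4]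
  have A6 : R ∘ₗ cnv mul comul S LinearMap.id = E := by
    rw [← convR (cnv mul comul S LinearMap.id), convA, convIdE, ← A2, A1]
  refine ⟨?_, ?_, ?_, ?_, ?_, ?_⟩
  · intro a
    exact (hRapp (S a)).symm.trans (LinearMap.congr_fun A4 a)
  · intro a
    exact (LinearMap.congr_fun A2 a).trans (hRapp a)
  · intro a
    exact (LinearMap.congr_fun A2 (S a)).trans (LinearMap.congr_fun A4 a)
  · intro a
    calc mul ((mul ((TensorProduct.map S LinearMap.id) (comul a))) ⊗ₜ[K] one)
        = R (cnv mul comul S LinearMap.id a) := (hRapp _).symm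
      _ = E a := LinearMap.congr_fun A6 a
      _ = counit a • one := hEapp a
  · -- item (v)
    intro a b
    set Dt := comul2 K H comul with hDt
    set commC := (TensorProduct.comm K H H).toLinearMap with hcommC
    set N : H ⊗[K] H →ₗ[K] H := mul ∘ₗ TensorProduct.map S S ∘ₗ commC with hN
    set E2 : H ⊗[K] H →ₗ[K] H :=
      LinearMap.toSpanSingleton K H one ∘ₗ counit2 K H counit with hE2
    have convAC : ∀ F G M : H ⊗[K] H →ₗ[K] H,
        cnv mul Dt (cnv mul Dt F G) M = cnv mul Dt F (cnv mul Dt G M) := by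
      intro F G M
      rw [hDt]
      exact cnv_assoc mul _ mulA (comul2_coassoc comul hH.isC3.coassoc) F G M
    have convLC : ∀ F : H ⊗[K] H →ₗ[K] H, cnv mul Dt E2 F = F := by
      intro F
      rw [hDt, hE2]
      exact cnv_left_unit mul one _ _
        (comul2_counit_left comul counit hH.isC3.counit_comul) hH.one_mul F
    have convRC : ∀ F : H ⊗[K] H →ₗ[K] H, cnv mul Dt F E2 = R ∘ₗ F := by
      intro F
      rw [hDt, hE2, hR]
      exact cnv_right_unit mul one _ _
        (comul2_counit_right comul counit hH.isC3.comul_counit) F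
    have V1 : cnv mul Dt mul (S ∘ₗ mul) = E2 := by
      have h := cnv_comp mul comul Dt mul (by rw [hDt]; exact hH.comul_mul) LinearMap.id S
      rw [antipodeM, LinearMap.id_comp] at h
      rw [← h, hE, hE2, LinearMap.comp_assoc, hH.counit_mul]
    have V2 : cnv mul Dt mul N = E2 := by
      apply TensorProduct.ext'
      intro x y
      have key : ∀ u : H ⊗[K] H,
          mul (TensorProduct.map mul N
            ((tensorTensorTensorComm K H H H H) (u ⊗ₜ[K] comul y)))
            = counit y • mul (TensorProduct.map LinearMap.id S u) := by
        intro u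
        induction u using TensorProduct.induction_on with
        | zero => simp
        | tmul a' b' =>
            have inner : ∀ v : H ⊗[K] H,
                mul (TensorProduct.map mul N
                  ((tensorTensorTensorComm K H H H H) ((a' ⊗ₜ[K] b') ⊗ₜ[K] v)))
                  = mul (a' ⊗ₜ[K]
                      mul ((mul (TensorProduct.map LinearMap.id S v)) ⊗ₜ[K] S b')) := by
              intro v
              induction v using TensorProduct.induction_on with
              | zero => simp
              | tmul c d =>
                  simp only [tensorTensorTensorComm_tmul, map_tmul, hN, hcommC,
                    LinearMap.coe_comp, Function.comp_apply, LinearEquiv.coe_coe,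
                    comm_tmul, LinearMap.id_coe, id_eq]
                  rw [hH.mul_assoc, ← hH.mul_assoc c]
              | add p q hp hq =>
                  simp only [tmul_add, map_add, hp, hq, add_tmul, mul_add]
            rw [inner (comul y), hH.right_antipode y]
            simp only [map_tmul, LinearMap.id_coe, id_eq]
            rw [← TensorProduct.smul_tmul', LinearMap.map_smul, hH.one_mul,
              TensorProduct.tmul_smul, LinearMap.map_smul]
        | add p q hp hq =>
            simp only [add_tmul, map_add, hp, hq, smul_add]
      have happL : cnv mul Dt mul N (x ⊗ₜ[K] y)
          = mul (TensorProduct.map mul N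
              ((tensorTensorTensorComm K H H H H) (comul x ⊗ₜ[K] comul y))) := by
        rw [hDt]; rfl
      rw [happL, key (comul x), hH.right_antipode x]
      rw [hE2]
      simp [counit2, LinearMap.mul'_apply, smul_smul, mul_comm]
    have SScoalg := comul2_map comul S S hH.comul_S hH.comul_S
    have commcoalg := comul2_comm (K := K) (B := H) comul
    have h'coalg : Dt ∘ₗ (TensorProduct.map S S ∘ₗ commC)
        = TensorProduct.map (TensorProduct.map S S ∘ₗ commC)
            (TensorProduct.map S S ∘ₗ commC) ∘ₗ Dt := by
      rw [hDt, hcommC]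
      calc comul2 K H comul ∘ₗ
          (TensorProduct.map S S ∘ₗ (TensorProduct.comm K H H).toLinearMap)
          = (comul2 K H comul ∘ₗ TensorProduct.map S S) ∘ₗ
              (TensorProduct.comm K H H).toLinearMap := by
            simp only [LinearMap.comp_assoc]
        _ = TensorProduct.map (TensorProduct.map S S) (TensorProduct.map S S) ∘ₗ
              (comul2 K H comul ∘ₗ (TensorProduct.comm K H H).toLinearMap) := by
            rw [SScoalg]; simp only [LinearMap.comp_assoc]
        _ = TensorProduct.map (TensorProduct.map S S) (TensorProduct.map S S) ∘ₗ
              TensorProduct.map (TensorProduct.comm K H H).toLinearMap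
                (TensorProduct.comm K H H).toLinearMap ∘ₗ comul2 K H comul := by
            rw [commcoalg]
        _ = TensorProduct.map
              (TensorProduct.map S S ∘ₗ (TensorProduct.comm K H H).toLinearMap)
              (TensorProduct.map S S ∘ₗ (TensorProduct.comm K H H).toLinearMap) ∘ₗ
                comul2 K H comul := by
            rw [← LinearMap.comp_assoc, ← TensorProduct.map_comp]
    have commcomm : commC ∘ₗ commC = LinearMap.id := by
      rw [hcommC]; ext a' b'; rfl
    have mulRR : mul ∘ₗ TensorProduct.map R R = R ∘ₗ mul := by
      ext a' b'
      simp only [AlgebraTensorModule.curry_apply, TensorProduct.curry_apply,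
        LinearMap.coe_restrictScalars, LinearMap.coe_comp, Function.comp_apply,
        map_tmul, hR, TensorProduct.mk_apply, LinearMap.flip_apply]
      rw [hH.mul_assoc, hH.one_mul, ← hH.mul_assoc]
    have V5 : N ∘ₗ (TensorProduct.map S S ∘ₗ commC) = R ∘ₗ mul := by
      rw [hN]
      calc (mul ∘ₗ TensorProduct.map S S ∘ₗ commC) ∘ₗ (TensorProduct.map S S ∘ₗ commC)
          = mul ∘ₗ TensorProduct.map S S ∘ₗ
              ((commC ∘ₗ TensorProduct.map S S) ∘ₗ commC) := by
            simp only [LinearMap.comp_assoc]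
        _ = mul ∘ₗ TensorProduct.map S S ∘ₗ
              ((TensorProduct.map S S ∘ₗ commC) ∘ₗ commC) := by
            rw [hcommC, comm_nat]
        _ = mul ∘ₗ (TensorProduct.map S S ∘ₗ TensorProduct.map S S) ∘ₗ (commC ∘ₗ commC) := by
            simp only [LinearMap.comp_assoc]
        _ = mul ∘ₗ TensorProduct.map (S ∘ₗ S) (S ∘ₗ S) := by
            rw [commcomm, ← TensorProduct.map_comp, LinearMap.comp_id]
        _ = R ∘ₗ mul := by rw [A2, mulRR]
    have eps2h' : counit2 K H counit ∘ₗ (TensorProduct.map S S ∘ₗ commC)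
        = counit2 K H counit := by
      rw [hcommC, ← LinearMap.comp_assoc, counit2_map counit S S hH.counit_S hH.counit_S,
        counit2_comm]
    have V6 : cnv mul Dt N (R ∘ₗ mul) = E2 := by
      have h := cnv_comp mul Dt Dt (TensorProduct.map S S ∘ₗ commC) h'coalg mul N
      rw [V2, V5] at h
      have hm : mul ∘ₗ (TensorProduct.map S S ∘ₗ commC) = N := by rw [hN]
      rw [hm] at h
      rw [← h, hE2, LinearMap.comp_assoc, eps2h']
    have Rcoalg : comul ∘ₗ R = TensorProduct.map R R ∘ₗ comul := by
      rw [← A2, ← LinearMap.comp_assoc, hH.comul_S, LinearMap.comp_assoc, hH.comul_S,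
        ← LinearMap.comp_assoc, ← TensorProduct.map_comp, A2]
    have epsR : counit ∘ₗ R = counit := by
      rw [← A2, ← LinearMap.comp_assoc, hH.counit_S, hH.counit_S]
    have RRcoalg : Dt ∘ₗ TensorProduct.map R R
        = TensorProduct.map (TensorProduct.map R R) (TensorProduct.map R R) ∘ₗ Dt := by
      rw [hDt]; exact comul2_map comul R R Rcoalg Rcoalg
    have V8 : (S ∘ₗ mul) ∘ₗ TensorProduct.map R R = S ∘ₗ mul := by
      rw [LinearMap.comp_assoc, mulRR, ← LinearMap.comp_assoc, SR]
    have eps2RR : counit2 K H counit ∘ₗ TensorProduct.map R R = counit2 K H counit :=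
      counit2_map counit R R epsR epsR
    have V9 : cnv mul Dt (R ∘ₗ mul) (S ∘ₗ mul) = E2 := by
      have h := cnv_comp mul Dt Dt (TensorProduct.map R R) RRcoalg mul (S ∘ₗ mul)
      rw [V1, mulRR, V8] at h
      rw [← h, hE2, LinearMap.comp_assoc, eps2RR]
    have rMul : R ∘ₗ mul = mul ∘ₗ TensorProduct.map LinearMap.id R := by
      ext a' b'
      simp only [AlgebraTensorModule.curry_apply, TensorProduct.curry_apply,
        LinearMap.coe_restrictScalars, LinearMap.coe_comp, Function.comp_apply,
        map_tmul, hR, TensorProduct.mk_apply, LinearMap.flip_apply,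
        LinearMap.id_coe, id_eq]
      rw [hH.mul_assoc]
    have RN : R ∘ₗ N = N := by
      rw [hN]
      calc R ∘ₗ (mul ∘ₗ TensorProduct.map S S ∘ₗ commC)
          = (R ∘ₗ mul) ∘ₗ TensorProduct.map S S ∘ₗ commC := by
            simp only [LinearMap.comp_assoc]
        _ = mul ∘ₗ ((TensorProduct.map LinearMap.id R ∘ₗ TensorProduct.map S S) ∘ₗ commC) := by
            rw [rMul]; simp only [LinearMap.comp_assoc]
        _ = mul ∘ₗ TensorProduct.map S S ∘ₗ commC := by
            rw [← TensorProduct.map_comp, LinearMap.id_comp, A4]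
    have V10 : S ∘ₗ mul = N := by
      conv_lhs => rw [← convLC (S ∘ₗ mul)]
      rw [← V6, convAC, V9, convRC, RN]
    have h := LinearMap.congr_fun V10 (a ⊗ₜ[K] b)
    simpa [hN, hcommC] using h
  · -- uniqueness
    intro S' hS'com hS'cou _hS'one hS'antip
    have antipodeM' : cnv mul comul LinearMap.id S' = E := by
      apply LinearMap.ext
      intro a
      rw [cnv_apply, hEapp]
      exact hS'antip a
    have ES' : E ∘ₗ S' = E := by rw [hE, LinearMap.comp_assoc, hS'cou]
    have U1 : cnv mul comul S' (S ∘ₗ S') = E := by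
      have h := cnv_comp mul comul comul S' hS'com LinearMap.id S
      rw [antipodeM, LinearMap.id_comp] at h
      rw [← h, ES']
    have U3 : S ∘ₗ S' = R := by
      conv_lhs => rw [← convL (S ∘ₗ S')]
      rw [← antipodeM', convA, U1, convIdE]
    have U4 : cnv mul comul S' R = E := by rw [← U3]; exact U1
    have U5 : cnv mul comul R S' = E := by
      rw [← convIdE, convA, convL, antipodeM']
    have U6 : S' = R ∘ₗ S' := by
      conv_lhs => rw [← convL S']
      rw [← U4, convA, U5, convR]
    have U7 : R ∘ₗ S' = S := by
      rw [← A2, LinearMap.comp_assoc, U3, SR]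
    exact U6.trans U7


end RackPaper
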